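/- Let G and H be graphs and suppose G contains two vertex-disjoint subgraphs each isomorphic to G with roots equidistant from the root of G (Properties (1) and (2)). Then the product graph G × H (with root (root_G, root_H)) also contains two vertex-disjoint subgraphs isomorphic to G × H with roots equidistant from the root of G × H. -/

import Mathlib

open SimpleGraph

private lemma walk_proj {V W : Type*} {G : SimpleGraph V} {H : SimpleGraph W}
    {x y : V × W} (w : (G □ H).Walk x y) :
    ∃ p : G.Walk x.1 y.1, p.length ≤ w.length := by
  induction w with
  | nil => exact ⟨Walk.nil, le_refl _⟩
  | @cons a b c hab _ ih =>
    obtain ⟨p, hp⟩ := ih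
    rcases hab with ⟨h1, h2⟩ | ⟨h1, h2⟩
    · exact ⟨Walk.cons h1 p, Nat.succ_le_succ hp⟩
    · exact ⟨p.copy h2.symm rfl, by simp; exact Nat.le_succ_of_le hp⟩

private lemma boxProd_dist_left {V W : Type*} (G : SimpleGraph V) (H : SimpleGraph W)
    (a c : V) (b : W) : (G □ H).dist (a, b) (c, b) = G.dist a c := by
  by_cases hr : G.Reachable a c
  · have hr' : (G □ H).Reachable (a, b) (c, b) := by
      obtain ⟨w⟩ := hr
      exact ⟨w.boxProdLeft H b⟩
    apply le_antisymm
    · obtain ⟨w, hw⟩ := hr.exists_walk_length_eq_dist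
      have := (G □ H).dist_le (w.boxProdLeft H b)
      rwa [show (w.boxProdLeft H b).length = w.length from Walk.length_map _ _, hw] at this
    · obtain ⟨w, hw⟩ := hr'.exists_walk_length_eq_dist
      obtain ⟨p, hp⟩ := walk_proj w
      have : G.dist a c ≤ p.length := G.dist_le p
      omega
  · have hr' : ¬ (G □ H).Reachable (a, b) (c, b) := by
      rintro ⟨w⟩
      obtain ⟨p, -⟩ := walk_proj w
      exact hr ⟨p⟩
    rw [SimpleGraph.dist_eq_zero_of_not_reachable hr,
      SimpleGraph.dist_eq_zero_of_not_reachable hr']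

private def boxProdEmb {V W : Type*} {G : SimpleGraph V} (H : SimpleGraph W)
    (f : G ↪g G) : (G □ H) ↪g (G □ H) where
  toFun := fun x => (f x.1, x.2)
  inj' := fun x y h => by
    obtain ⟨h1, h2⟩ := Prod.ext_iff.mp h
    exact Prod.ext (f.injective h1) h2
  map_rel_iff' := by
    intro x y
    show (G □ H).Adj (f x.1, x.2) (f y.1, y.2) ↔ (G □ H).Adj x y
    simp [SimpleGraph.boxProd_adj, f.map_adj_iff, f.injective.eq_iff]

theorem boxProd_preserves_recursive_structure {V W : Type*}
    (G : SimpleGraph V) (H : SimpleGraph W) (oG : V) (oH : W)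
    (f₁ f₂ : G ↪g G)
    (hdisj : Disjoint (Set.range f₁) (Set.range f₂))
    (heq : G.dist oG (f₁ oG) = G.dist oG (f₂ oG)) :
    ∃ F₁ F₂ : (G □ H) ↪g (G □ H),
      Disjoint (Set.range F₁) (Set.range F₂) ∧
      (G □ H).dist (oG, oH) (F₁ (oG, oH)) = (G □ H).dist (oG, oH) (F₂ (oG, oH)) := by
  refine ⟨boxProdEmb H f₁, boxProdEmb H f₂, ?_, ?_⟩
  · rw [Set.disjoint_left]
    rintro _ ⟨x, rfl⟩ ⟨y, hy⟩
    have : f₂ y.1 = f₁ x.1 := (Prod.ext_iff.mp hy).1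
    exact Set.disjoint_left.mp hdisj ⟨x.1, rfl⟩ ⟨y.1, this⟩
  · show (G □ H).dist (oG, oH) (f₁ oG, oH) = (G □ H).dist (oG, oH) (f₂ oG, oH)
    rw [boxProd_dist_left, boxProd_dist_left, heq]
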